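/- Let (A, n) be an equidimensional complete Noetherian local ring of dimension d ≥ 3, let Ξ(A) be the set of ideals p + q where p, q range over minimal primes of A with √(p+q) ≠ n, and fix x ∈ n lying in no minimal prime of any ideal in Ξ(A). Then for any 1 ≤ t ≤ d−2, if Γ_t(A/(x)) is connected, then Γ_t(A) is connected. -/

import Mathlib

open IsLocalRing PrimeSpectrum CategoryTheory

noncomputable section

/-- Height of an ideal: the infimum of the heights of the primes containing it. -/
noncomputable def Ideal.height' {A : Type*} [CommRing A] (I : Ideal A) : ℕ∞ :=
  ⨅ p ∈ {p : PrimeSpectrum A | I ≤ p.asIdeal}, Order.height p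

/-- A ring is equidimensional if `dim (A/p) = dim A` for every minimal prime `p`. -/
def IsEquidimensional (A : Type*) [CommRing A] : Prop :=
  ∀ p ∈ minimalPrimes A, ringKrullDim (A ⧸ p) = ringKrullDim A

/-- The graph `Γ_t(A)` on the minimal primes of `A`, with an edge between distinct
minimal primes `p ≠ q` iff `ht (p + q) ≤ t`. -/
def Gamma (A : Type*) [CommRing A] (t : ℕ) :
    SimpleGraph {p : Ideal A // p ∈ minimalPrimes A} where
  Adj p q := p ≠ q ∧ Ideal.height' (p.1 ⊔ q.1) ≤ (t : ℕ∞)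
  symm := by
    constructor
    intro p q h
    exact ⟨h.1.symm, by rw [sup_comm]; exact h.2⟩
  loopless := ⟨fun p h => h.1 rfl⟩

/-- The connectedness dimension of `A`: the minimal dimension of a closed subset
`Z = V(J)` of `Spec A` such that `Spec A \ Z` is disconnected (the empty space counting
as disconnected). -/
noncomputable def connDim (A : Type*) [CommRing A] : WithBot ℕ∞ :=
  sInf {d | ∃ J : Ideal A, ringKrullDim (A ⧸ J) = d ∧
    ¬ IsConnected ((PrimeSpectrum.zeroLocus (J : Set A))ᶜ)}

/-- The set `Ξ(A)` of ideals `p + q`, for `p, q` minimal primes of `A` with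
`√(p + q)` different from the maximal ideal. -/
def Xi (A : Type*) [CommRing A] [IsLocalRing A] : Set (Ideal A) :=
  {I | ∃ p ∈ minimalPrimes A, ∃ q ∈ minimalPrimes A,
    I = p ⊔ q ∧ (p ⊔ q).radical ≠ maximalIdeal A}

section AuxHeight


variable {R : Type*} [CommRing R]

lemma height'_le_height (I : Ideal R) (p : PrimeSpectrum R) (hp : I ≤ p.asIdeal) :
    Ideal.height' I ≤ Order.height p :=
  biInf_le _ hp

lemma exists_prime_of_height'_le (I : Ideal R) (t : ℕ) (h : Ideal.height' I ≤ (t : ℕ∞)) :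
    ∃ p : PrimeSpectrum R, I ≤ p.asIdeal ∧ Order.height p ≤ (t : ℕ∞) := by
  by_contra hc
  push_neg at hc
  have h2 : (t : ℕ∞) + 1 ≤ Ideal.height' I := by
    refine le_iInf₂ fun p hp => ?_
    have := hc p hp
    exact Order.add_one_le_of_lt this
  have h3 : (t : ℕ∞) + 1 ≤ (t : ℕ∞) := h2.trans h
  exact absurd h3 (not_le.mpr ((ENat.lt_add_one_iff (ENat.coe_ne_top t)).mpr le_rfl))

lemma height_add_one_le_of_lt {α : Type*} [Preorder α] {a b : α} (h : a < b) :
    Order.height a + 1 ≤ Order.height b := by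
  rw [Order.height_eq_iSup_lt_height b]
  exact le_iSup₂_of_le a h le_rfl

end AuxHeight

section Artinian


variable {S : Type*} [CommRing S] [IsNoetherianRing S]

lemma isArtinianRing_of_pow_maximal_eq_bot (m : Ideal S) (hm : m.IsMaximal) (k : ℕ)
    (hk : m ^ k = ⊥) : IsArtinianRing S := by
  have key : ∀ j : ℕ, IsArtinian S (S ⧸ (m ^ j : Ideal S)) := by
    intro j
    induction j with
    | zero =>
      have hsub : Subsingleton (S ⧸ (m ^ 0 : Ideal S)) := by
        rw [pow_zero]
        exact Submodule.Quotient.subsingleton_iff.mpr (by rw [Ideal.one_eq_top])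
      exact isArtinian_of_finite
    | succ j ih =>
      set N : Submodule S (S ⧸ (m ^ (j + 1) : Ideal S)) :=
        Submodule.map (m ^ (j + 1) : Ideal S).mkQ (m ^ j : Ideal S) with hN
      have hNart : IsArtinian S N := by
        -- N is killed by m
        have htor : Module.IsTorsionBySet S N (m : Set S) := by
          rintro ⟨n, hn⟩ ⟨r, hr⟩
          obtain ⟨a, ha, rfl⟩ := hn
          have : r • a ∈ (m ^ (j + 1) : Ideal S) := by
            rw [pow_succ, mul_comm]
            exact Ideal.mul_mem_mul hr ha
          ext
          show r • ((m ^ (j + 1) : Ideal S).mkQ a) = 0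
          rw [← map_smul, Submodule.mkQ_apply, Submodule.Quotient.mk_eq_zero]
          exact this
        letI : Module (S ⧸ m) N := htor.module
        haveI : IsScalarTower S (S ⧸ m) N := htor.isScalarTower
        haveI : Module.Finite S N := by
          rw [Module.Finite.iff_fg]
          exact IsNoetherian.noetherian N
        haveI : Module.Finite (S ⧸ m) N := Module.Finite.of_restrictScalars_finite S _ _
        haveI : m.IsMaximal := hm
        letI : Field (S ⧸ m) := Ideal.Quotient.field m
        haveI hart : IsArtinian (S ⧸ m) N := isArtinian_of_fg_of_artinian'
        rw [isArtinian_iff]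
        let g : Submodule S N → Submodule (S ⧸ m) N := fun P =>
          { carrier := P
            add_mem' := fun h1 h2 => P.add_mem h1 h2
            zero_mem' := P.zero_mem
            smul_mem' := by
              intro c x hx
              obtain ⟨s, rfl⟩ := Ideal.Quotient.mk_surjective c
              have hsx : (Ideal.Quotient.mk m s) • x = s • x := by
                rw [← Ideal.Quotient.algebraMap_eq, algebraMap_smul]
              rw [hsx]
              exact P.smul_mem s hx }
        have hg : ∀ P Q : Submodule S N, P < Q → g P < g Q := by
          intro P Q h
          rw [lt_iff_le_and_ne] at h ⊢
          refine ⟨fun a ha => h.1 ha, fun hc => h.2 ?_⟩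
          ext a
          exact ⟨fun ha => (congrArg (a ∈ ·) (congrArg SetLike.coe hc) : _).mp ha,
            fun ha => (congrArg (a ∈ ·) (congrArg SetLike.coe hc) : _).mpr ha⟩
        exact Subrelation.wf (fun {P Q} h => hg P Q h)
          (InvImage.wf g ((isArtinian_iff _ _).mp hart))
      have hquot : IsArtinian S ((S ⧸ (m ^ (j + 1) : Ideal S)) ⧸ N) := by
        have hle : (m ^ (j + 1) : Ideal S) ≤ (m ^ j : Ideal S) :=
          Ideal.pow_le_pow_right (Nat.le_succ j)
        exact isArtinian_of_linearEquiv
          (Submodule.quotientQuotientEquivQuotient _ _ hle).symm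
      exact (isArtinian_iff_submodule_quotient N).mpr ⟨hNart, hquot⟩
  have := key k
  rw [hk] at this
  exact isArtinian_of_linearEquiv (Submodule.quotEquivOfEqBot (⊥ : Ideal S) rfl)

end Artinian

/-- **Krull's principal ideal theorem**, local form: if the maximal ideal of a Noetherian
local ring is minimal over a principal ideal `(y)`, then any prime strictly below the
maximal ideal is a minimal prime of the ring. -/
lemma mem_minimalPrimes_of_lt_of_max_minimal {R : Type*} [CommRing R] [IsLocalRing R]
    [IsNoetherianRing R] (y : R)
    (hy : maximalIdeal R ∈ (Ideal.span {y} : Ideal R).minimalPrimes)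
    (p : Ideal R) (hp : p.IsPrime) (hlt : p < maximalIdeal R) : p ∈ minimalPrimes R := by
  haveI := hp
  -- every prime containing (y) is the maximal ideal
  have hprime_eq : ∀ q : Ideal R, q.IsPrime → Ideal.span {y} ≤ q → q = maximalIdeal R := by
    intro q hq hle
    haveI := hq
    obtain ⟨z, hz, hzq⟩ := Ideal.exists_minimalPrimes_le hle
    have h1 : maximalIdeal R ≤ z :=
      hy.2 hz.1 (le_maximalIdeal hz.1.1.ne_top)
    have h2 : maximalIdeal R ≤ q := h1.trans hzq
    exact le_antisymm (le_maximalIdeal hq.ne_top) h2 |>.symm ▸ rfl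
  have hymax : y ∈ maximalIdeal R := hy.1.2 (Ideal.mem_span_singleton_self y)
  have hynotp : y ∉ p := by
    intro hyp
    have := hprime_eq p hp ((Ideal.span_singleton_le_iff_mem _).mpr hyp)
    exact hlt.ne this
  -- radical of (y) is the maximal ideal
  have hrad : (Ideal.span {y} : Ideal R).radical = maximalIdeal R := by
    rw [Ideal.radical_eq_sInf]
    apply le_antisymm
    · exact sInf_le ⟨(Ideal.span_singleton_le_iff_mem _).mpr hymax,
        (maximalIdeal.isMaximal R).isPrime⟩
    · refine le_sInf fun J hJ => ?_
      rw [hprime_eq J hJ.2 hJ.1]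
  obtain ⟨k, hk⟩ : ∃ k, (maximalIdeal R) ^ k ≤ Ideal.span {y} :=
    Ideal.exists_pow_le_of_le_radical_of_fg (hrad ▸ le_rfl) (IsNoetherian.noetherian _)
  -- the quotient S = R/(y) is Artinian
  set S := R ⧸ (Ideal.span {y} : Ideal R) with hS
  set mk : R →+* S := Ideal.Quotient.mk (Ideal.span {y} : Ideal R) with hmk
  have hspan_ne : (Ideal.span {y} : Ideal R) ≠ ⊤ :=
    fun h => (maximalIdeal.isMaximal R).ne_top (top_le_iff.mp (h ▸ hy.1.2))
  have hm'max : ((maximalIdeal R).map mk).IsMaximal := by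
    rcases Ideal.map_eq_top_or_isMaximal_of_surjective mk Ideal.Quotient.mk_surjective
      (maximalIdeal.isMaximal R) with h | h
    · exfalso
      have := congrArg (Ideal.comap mk) h
      rw [Ideal.comap_map_of_surjective mk Ideal.Quotient.mk_surjective, Ideal.comap_top] at this
      have h2 : (1 : R) ∈ maximalIdeal R ⊔ Ideal.comap mk ⊥ := this.symm ▸ Submodule.mem_top
      have h3 : Ideal.comap mk ⊥ ≤ maximalIdeal R := by
        rw [← RingHom.ker_eq_comap_bot, hmk, Ideal.mk_ker]
        exact le_maximalIdeal hspan_ne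
      rw [sup_eq_left.mpr h3] at h2
      exact (maximalIdeal.isMaximal R).ne_top ((Ideal.eq_top_iff_one _).mpr h2)
    · exact h
  have hartS : IsArtinianRing S := by
    refine isArtinianRing_of_pow_maximal_eq_bot _ hm'max k ?_
    rw [← Ideal.map_pow, ← le_bot_iff]
    calc Ideal.map mk ((maximalIdeal R) ^ k) ≤ Ideal.map mk (Ideal.span {y}) :=
        Ideal.map_mono hk
      _ = ⊥ := by rw [hmk, Ideal.map_quotient_self]
  -- symbolic powers
  set L := Localization.AtPrime p with hL
  set P : Ideal L := p.map (algebraMap R L) with hP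
  set In : ℕ → Ideal R := fun n => (P ^ n).comap (algebraMap R L) with hIn
  have hInanti : ∀ n, In (n + 1) ≤ In n := fun n =>
    Ideal.comap_mono (Ideal.pow_le_pow_right (Nat.le_succ n))
  -- primary property
  have hprimary : ∀ n (c : R), c * y ∈ In n → c ∈ In n := by
    intro n c hc
    have hyu : IsUnit (algebraMap R L y) := IsLocalization.map_units (M := p.primeCompl) L ⟨y, hynotp⟩
    have : algebraMap R L c * algebraMap R L y ∈ P ^ n := by
      rw [← map_mul]; exact hc
    rw [mul_comm] at this
    exact Ideal.mem_comap.mpr ((Ideal.unit_mul_mem_iff_mem _ hyu).mp this)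
  -- stabilization
  obtain ⟨n, hn⟩ : ∃ n, ∀ nn, n ≤ nn → (In n).map mk = (In nn).map mk := by
    have := IsArtinian.monotone_stabilizes (R := S) (M := S)
      ⟨fun n => OrderDual.toDual ((In n).map mk), by
        intro a b hab
        simp only
        induction b, hab using Nat.le_induction with
        | base => exact le_rfl
        | succ b hb ih =>
          have h1 : (In (b+1)).map mk ≤ (In b).map mk := Ideal.map_mono (hInanti b)
          exact h1.trans ih⟩
    obtain ⟨n, hn⟩ := this
    exact ⟨n, fun m hm => hn m hm⟩
  have hsub : In n ≤ In (n + 1) ⊔ (Ideal.span {y} : Ideal R) • In n := by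
    intro a ha
    have h1 : mk a ∈ (In (n + 1)).map mk := by
      rw [← hn (n + 1) (Nat.le_succ n)]
      exact Ideal.mem_map_of_mem mk ha
    rw [Ideal.mem_map_iff_of_surjective mk Ideal.Quotient.mk_surjective] at h1
    obtain ⟨b, hb, hab⟩ := h1
    have hyc : a - b ∈ (Ideal.span {y} : Ideal R) := by
      rw [← Ideal.mk_ker (I := (Ideal.span {y} : Ideal R)), RingHom.mem_ker, map_sub, hab,
        sub_self]
    obtain ⟨e, he⟩ := Ideal.mem_span_singleton'.mp hyc
    have heIn : e ∈ In n := by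
      apply hprimary n
      rw [he]
      exact Submodule.sub_mem _ ha (hInanti n hb)
    have : a = b + (a - b) := by ring
    rw [this, ← he, Ideal.smul_eq_mul, mul_comm (Ideal.span {y})]
    exact Submodule.add_mem_sup hb (Ideal.mul_mem_mul heIn (Ideal.mem_span_singleton_self y))
  have hstab : In n = In (n + 1) := by
    refine le_antisymm ?_ (hInanti n)
    refine Submodule.le_of_le_smul_of_le_jacobson_bot (IsNoetherian.noetherian _) ?_ hsub
    exact le_trans ((Ideal.span_singleton_le_iff_mem _).mpr hymax) (maximalIdeal_le_jacobson ⊥)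
  -- transfer to the localization : P^n = P^(n+1)
  have hPn : P ^ n = P ^ (n + 1) := by
    have h1 : Ideal.map (algebraMap R L) (In n) = P ^ n :=
      IsLocalization.map_comap p.primeCompl L (P ^ n)
    have h2 : Ideal.map (algebraMap R L) (In (n + 1)) = P ^ (n + 1) :=
      IsLocalization.map_comap p.primeCompl L (P ^ (n + 1))
    rw [← h1, ← h2, hstab]
  -- Nakayama in the localization
  haveI : IsNoetherianRing L := IsLocalization.isNoetherianRing p.primeCompl L ‹_›
  have hPle : P ≤ maximalIdeal L := by
    rw [hP, Ideal.map_le_iff_le_comap, show Ideal.comap (algebraMap R L) (maximalIdeal L) = p from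
      IsLocalization.AtPrime.comap_maximalIdeal L p]
  have hbot : P ^ n = ⊥ := by
    refine Submodule.eq_bot_of_le_smul_of_le_jacobson_bot (maximalIdeal L) _
      (IsNoetherian.noetherian _) ?_ (maximalIdeal_le_jacobson ⊥)
    calc (P ^ n : Ideal L) = P ^ (n + 1) := hPn
      _ = P * P ^ n := by rw [pow_succ, mul_comm]
      _ ≤ maximalIdeal L * P ^ n := Ideal.mul_mono_left hPle
      _ = maximalIdeal L • P ^ n := rfl
  -- conclude
  refine ⟨⟨hp, bot_le⟩, ?_⟩
  rintro z ⟨hz, -⟩ hzp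
  have hdisj : Disjoint (p.primeCompl : Set R) (z : Set R) := by
    rw [Set.disjoint_left]
    exact fun a ha hap => ha (hzp hap)
  have hZ : (z.map (algebraMap R L)).IsPrime :=
    IsLocalization.isPrime_of_isPrime_disjoint p.primeCompl L z hz hdisj
  have hPZ : P ≤ z.map (algebraMap R L) := by
    intro a haP
    refine hZ.mem_of_pow_mem n ?_
    have : a ^ n ∈ P ^ n := Ideal.pow_mem_pow haP n
    rw [hbot, Ideal.mem_bot] at this
    rw [this]
    exact zero_mem _
  intro a hap
  have h1 : algebraMap R L a ∈ z.map (algebraMap R L) := hPZ (Ideal.mem_map_of_mem _ hap)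
  have h2 : a ∈ (z.map (algebraMap R L)).comap (algebraMap R L) := h1
  rwa [show Ideal.comap (algebraMap R L) (z.map (algebraMap R L)) = z from
    IsLocalization.comap_map_of_isPrime_disjoint p.primeCompl L hz hdisj] at h2

/-- **Krull's principal ideal theorem**: a prime strictly below a minimal prime of a
principal ideal is a minimal prime of the ring. -/
lemma mem_minimalPrimes_of_lt_span {R : Type*} [CommRing R] [IsNoetherianRing R] (y : R)
    {Q : Ideal R} (hQ : Q ∈ (Ideal.span {y} : Ideal R).minimalPrimes) {p : Ideal R}
    (hp : p.IsPrime) (hlt : p < Q) : p ∈ minimalPrimes R := by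
  haveI hQp : Q.IsPrime := hQ.1.1
  set L := Localization.AtPrime Q with hL
  haveI : IsNoetherianRing L := IsLocalization.isNoetherianRing Q.primeCompl L ‹_›
  have hcm : Ideal.comap (algebraMap R L) (maximalIdeal L) = Q :=
    IsLocalization.AtPrime.comap_maximalIdeal L Q
  have hymax : algebraMap R L y ∈ maximalIdeal L := by
    have h0 : y ∈ Q := hQ.1.2 (Ideal.mem_span_singleton_self y)
    rw [← hcm] at h0
    exact h0
  have hspan' : Ideal.span {algebraMap R L y} ≤ maximalIdeal L :=
    (Ideal.span_singleton_le_iff_mem _).mpr hymax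
  have hmax_min : maximalIdeal L ∈ (Ideal.span ({algebraMap R L y} : Set L)).minimalPrimes := by
    refine ⟨⟨(maximalIdeal.isMaximal L).isPrime, hspan'⟩, ?_⟩
    rintro W ⟨hWp, hWy⟩ hWle
    have hcW : (Ideal.comap (algebraMap R L) W).IsPrime := hWp.comap _
    have h1 : Ideal.span {y} ≤ W.comap (algebraMap R L) := by
      rw [Ideal.span_singleton_le_iff_mem, Ideal.mem_comap]
      exact hWy (Ideal.mem_span_singleton_self _)
    have h2 : W.comap (algebraMap R L) ≤ Q := le_trans (Ideal.comap_mono hWle) hcm.le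
    have h4 : W.comap (algebraMap R L) = Q := le_antisymm h2 (hQ.2 ⟨hcW, h1⟩ h2)
    have e1 : Ideal.map (algebraMap R L) (W.comap (algebraMap R L)) = W :=
      IsLocalization.map_comap Q.primeCompl L W
    have e3 := congrArg (Ideal.map (algebraMap R L)) hcm
    rw [IsLocalization.map_comap Q.primeCompl L] at e3
    have h5 : W = maximalIdeal L := by rw [← e1, h4, ← e3]
    exact h5.ge
  have hdisj : Disjoint (Q.primeCompl : Set R) (p : Set R) := by
    rw [Set.disjoint_left]
    exact fun a ha hap => ha (hlt.le hap)
  have hp' : (p.map (algebraMap R L)).IsPrime :=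
    IsLocalization.isPrime_of_isPrime_disjoint Q.primeCompl L p hp hdisj
  have hcomap_p : Ideal.comap (algebraMap R L) (p.map (algebraMap R L)) = p :=
    IsLocalization.comap_map_of_isPrime_disjoint Q.primeCompl L hp hdisj
  have hlt' : p.map (algebraMap R L) < maximalIdeal L := by
    refine lt_of_le_of_ne ?_ ?_
    · rw [Ideal.map_le_iff_le_comap, hcm]
      exact hlt.le
    · intro h
      exact hlt.ne (by rw [← hcomap_p, h, hcm])
  have hpmin := mem_minimalPrimes_of_lt_of_max_minimal (algebraMap R L y) hmax_min _ hp' hlt'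
  refine ⟨⟨hp, bot_le⟩, ?_⟩
  rintro z ⟨hz, -⟩ hzp
  have hdz : Disjoint (Q.primeCompl : Set R) (z : Set R) := by
    rw [Set.disjoint_left]
    exact fun a ha hap => ha (hlt.le (hzp hap))
  have hz' : (z.map (algebraMap R L)).IsPrime :=
    IsLocalization.isPrime_of_isPrime_disjoint Q.primeCompl L z hz hdz
  have h1 : p.map (algebraMap R L) ≤ z.map (algebraMap R L) :=
    hpmin.2 ⟨hz', bot_le⟩ (Ideal.map_mono hzp)
  have h2 := Ideal.comap_mono (f := algebraMap R L) h1
  rwa [hcomap_p, show Ideal.comap (algebraMap R L) (z.map (algebraMap R L)) = z from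
    IsLocalization.comap_map_of_isPrime_disjoint Q.primeCompl L hz hdz] at h2

/-- There is no prime strictly between `J` and a minimal prime `Q` of `J + (y)`. -/
lemma no_prime_strictly_between {R : Type*} [CommRing R] [IsNoetherianRing R]
    (J : Ideal R) (hJ : J.IsPrime) (y : R) (Q : Ideal R)
    (hQ : Q ∈ (J ⊔ Ideal.span {y} : Ideal R).minimalPrimes) (z : Ideal R) (hz : z.IsPrime)
    (h1 : J < z) (h2 : z < Q) : False := by
  haveI hQp : Q.IsPrime := hQ.1.1
  have hJQ : J ≤ Q := le_sup_left.trans hQ.1.2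
  have hJz : J ≤ z := h1.le
  have hQ' : (Q.map (Ideal.Quotient.mk J)).IsPrime :=
    Ideal.map_isPrime_of_surjective Ideal.Quotient.mk_surjective (by rw [Ideal.mk_ker]; exact hJQ)
  have hz' : (z.map (Ideal.Quotient.mk J)).IsPrime :=
    Ideal.map_isPrime_of_surjective Ideal.Quotient.mk_surjective (by rw [Ideal.mk_ker]; exact hJz)
  have hcomapz : (z.map (Ideal.Quotient.mk J)).comap (Ideal.Quotient.mk J) = z := by
    rw [Ideal.comap_map_of_surjective (Ideal.Quotient.mk J) Ideal.Quotient.mk_surjective,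
      ← RingHom.ker_eq_comap_bot, Ideal.mk_ker, sup_eq_left.mpr hJz]
  have hcomapQ : (Q.map (Ideal.Quotient.mk J)).comap (Ideal.Quotient.mk J) = Q := by
    rw [Ideal.comap_map_of_surjective (Ideal.Quotient.mk J) Ideal.Quotient.mk_surjective,
      ← RingHom.ker_eq_comap_bot, Ideal.mk_ker, sup_eq_left.mpr hJQ]
  have hQmin : Q.map (Ideal.Quotient.mk J) ∈ (Ideal.span ({(Ideal.Quotient.mk J) y} : Set (R ⧸ J))).minimalPrimes := by
    have hmapsup : (J ⊔ Ideal.span {y} : Ideal R).map (Ideal.Quotient.mk J) = Ideal.span {(Ideal.Quotient.mk J) y} := by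
      rw [Ideal.map_sup, Ideal.map_quotient_self, bot_sup_eq, Ideal.map_span,
        Set.image_singleton]
    refine ⟨⟨hQ', ?_⟩, ?_⟩
    · rw [← hmapsup]
      exact Ideal.map_mono hQ.1.2
    · rintro W ⟨hWp, hWy⟩ hWle
      have h1' : J ⊔ Ideal.span {y} ≤ W.comap (Ideal.Quotient.mk J) := by
        refine sup_le ?_ ?_
        · intro a ha
          have h0 : (Ideal.Quotient.mk J) a = 0 := Ideal.Quotient.eq_zero_iff_mem.mpr ha
          rw [Ideal.mem_comap, h0]
          exact W.zero_mem
        · rw [Ideal.span_singleton_le_iff_mem, Ideal.mem_comap]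
          exact hWy (Ideal.mem_span_singleton_self _)
      have h2' : W.comap (Ideal.Quotient.mk J) ≤ Q := by
        have := Ideal.comap_mono (f := Ideal.Quotient.mk J) hWle
        rwa [hcomapQ] at this
      have h4' : W.comap (Ideal.Quotient.mk J) = Q := le_antisymm h2' (hQ.2 ⟨hWp.comap (Ideal.Quotient.mk J), h1'⟩ h2')
      have h5' : W = Q.map (Ideal.Quotient.mk J) := by
        rw [← h4', Ideal.map_comap_of_surjective (Ideal.Quotient.mk J) Ideal.Quotient.mk_surjective]
      exact h5'.ge
  have hltmap : z.map (Ideal.Quotient.mk J) < Q.map (Ideal.Quotient.mk J) := by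
    refine lt_of_le_of_ne (Ideal.map_mono h2.le) ?_
    intro h
    exact h2.ne (by rw [← hcomapz, h, hcomapQ])
  have hzmin := mem_minimalPrimes_of_lt_span ((Ideal.Quotient.mk J) y) hQmin hz' hltmap
  haveI : IsDomain (R ⧸ J) := Ideal.Quotient.isDomain J
  have hbotp : (⊥ : Ideal (R ⧸ J)).IsPrime := Ideal.bot_prime
  have hb : z.map (Ideal.Quotient.mk J) ≤ ⊥ := hzmin.2 ⟨hbotp, bot_le⟩ bot_le
  have hzJ : z ≤ J := by
    have := Ideal.comap_mono (f := Ideal.Quotient.mk J) hb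
    rw [hcomapz, ← RingHom.ker_eq_comap_bot, Ideal.mk_ker] at this
    exact this
  exact absurd hzJ h1.not_ge

/-- Chain modification: from a chain of length `n+1` ending at a prime containing `x`,
produce a chain of length `n` ending at the same prime, all of whose members contain `x`. -/
lemma exists_xchain {R : Type*} [CommRing R] [IsNoetherianRing R] (x : R) :
    ∀ n : ℕ, ∀ p : LTSeries (PrimeSpectrum R), p.length = n + 1 → x ∈ p.last.asIdeal →
      ∃ q : LTSeries (PrimeSpectrum R), q.length = n ∧ q.last = p.last ∧ x ∈ q.head.asIdeal := by
  intro n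
  induction n with
  | zero =>
    intro p _ hx
    exact ⟨RelSeries.singleton _ p.last, rfl, by rw [RelSeries.last_singleton], by
      rw [RelSeries.head_singleton]; exact hx⟩
  | succ n ih =>
    intro p hlen hx
    have h1 : p.eraseLast.length = n + 1 := by
      rw [RelSeries.eraseLast_length, hlen]
      omega
    have hWV : p.eraseLast.last < p.last := p.eraseLast_last_rel_last (by omega)
    by_cases hxW : x ∈ p.eraseLast.last.asIdeal
    · obtain ⟨q, hq1, hq2, hq3⟩ := ih p.eraseLast h1 hxW
      refine ⟨q.snoc p.last (hq2 ▸ hWV), by simp [hq1], by simp, by simpa using hq3⟩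
    · have h2 : p.eraseLast.eraseLast.length = n := by
        rw [RelSeries.eraseLast_length, h1]
        omega
      have hW2W : p.eraseLast.eraseLast.last < p.eraseLast.last :=
        p.eraseLast.eraseLast_last_rel_last (by omega)
      set W2 := p.eraseLast.eraseLast.last with hW2def
      have hxW2 : x ∉ W2.asIdeal := fun h =>
        hxW (((PrimeSpectrum.asIdeal_le_asIdeal _ _).mpr hW2W.le) h)
      have hW2V : W2 < p.last := hW2W.trans hWV
      haveI := p.last.2
      have hle : W2.asIdeal ⊔ Ideal.span {x} ≤ p.last.asIdeal :=
        sup_le ((PrimeSpectrum.asIdeal_le_asIdeal _ _).mpr hW2V.le)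
          ((Ideal.span_singleton_le_iff_mem _).mpr hx)
      obtain ⟨Z, hZmin, hZle⟩ := Ideal.exists_minimalPrimes_le hle
      have hZprime : Z.IsPrime := hZmin.1.1
      have hxZ : x ∈ Z := hZmin.1.2 (Ideal.mem_sup_right (Ideal.mem_span_singleton_self x))
      have hW2Z : W2.asIdeal < Z :=
        lt_of_le_of_ne (le_sup_left.trans hZmin.1.2) (fun h => hxW2 (h ▸ hxZ))
      have hZV : Z < p.last.asIdeal := by
        rcases lt_or_eq_of_le hZle with h | h
        · exact h
        · exfalso
          rw [h] at hZmin
          exact no_prime_strictly_between W2.asIdeal W2.2 x p.last.asIdeal hZmin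
            p.eraseLast.last.asIdeal p.eraseLast.last.2
            ((PrimeSpectrum.asIdeal_lt_asIdeal _ _).mpr hW2W)
            ((PrimeSpectrum.asIdeal_lt_asIdeal _ _).mpr hWV)
      have hrel : p.eraseLast.eraseLast.last < (⟨Z, hZprime⟩ : PrimeSpectrum R) :=
        (PrimeSpectrum.asIdeal_lt_asIdeal _ _).mp hW2Z
      set pz := p.eraseLast.eraseLast.snoc ⟨Z, hZprime⟩ hrel with hpzdef
      have hpzlen : pz.length = n + 1 := by
        rw [hpzdef, RelSeries.snoc_length, h2]
      have hpzlast : x ∈ pz.last.asIdeal := by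
        rw [hpzdef, RelSeries.last_snoc]
        exact hxZ
      obtain ⟨q, hq1, hq2, hq3⟩ := ih pz hpzlen hpzlast
      have hrel2 : q.last < p.last := by
        rw [hq2, hpzdef, RelSeries.last_snoc]
        exact (PrimeSpectrum.asIdeal_lt_asIdeal _ _).mp hZV
      exact ⟨q.snoc p.last hrel2, by simp [hq1], by simp, by simpa using hq3⟩

/-- Height comparison: for a prime of `R ⧸ (x)`, the height of its preimage in `R` is at
most one more than its height. -/
lemma height_comap_le {R : Type*} [CommRing R] [IsNoetherianRing R] (x : R)
    (V : PrimeSpectrum (R ⧸ Ideal.span ({x} : Set R))) :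
    Order.height ((PrimeSpectrum.comap (Ideal.Quotient.mk (Ideal.span ({x} : Set R)))) V)
      ≤ Order.height V + 1 := by
  apply Order.height_le
  intro p hp
  rcases Nat.eq_zero_or_eq_succ_pred p.length with h0 | hsucc
  · rw [h0]
    simp
  · set n := p.length - 1 with hn
    have hplen : p.length = n + 1 := by omega
    have hxlast : x ∈ p.last.asIdeal := by
      rw [hp]
      show x ∈ V.asIdeal.comap _
      rw [Ideal.mem_comap, Ideal.Quotient.eq_zero_iff_mem.mpr (Ideal.mem_span_singleton_self x)]
      exact V.asIdeal.zero_mem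
    obtain ⟨q, hq1, hq2, hq3⟩ := exists_xchain x n p hplen hxlast
    have hxall : ∀ i, x ∈ (q i).asIdeal := by
      intro i
      have : q.head ≤ q i := q.monotone (Fin.zero_le i)
      exact ((PrimeSpectrum.asIdeal_le_asIdeal _ _).mpr this) hq3
    let q' : LTSeries (PrimeSpectrum (R ⧸ Ideal.span ({x} : Set R))) :=
      { length := q.length
        toFun := fun i => ⟨Ideal.map (Ideal.Quotient.mk (Ideal.span ({x} : Set R)))
            (q i).asIdeal,
          Ideal.map_isPrime_of_surjective Ideal.Quotient.mk_surjective (by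
            rw [Ideal.mk_ker]
            exact (Ideal.span_singleton_le_iff_mem _).mpr (hxall i))⟩
        step := fun i => by
          have hstep := q.step i
          change q.toFun i.castSucc < q.toFun i.succ at hstep
          change (_ : PrimeSpectrum (R ⧸ Ideal.span ({x} : Set R))) < _
          rw [← PrimeSpectrum.asIdeal_lt_asIdeal]
          refine lt_of_le_of_ne
            (Ideal.map_mono ((PrimeSpectrum.asIdeal_le_asIdeal _ _).mpr hstep.le)) ?_
          intro heq
          have hc := congrArg (Ideal.comap (Ideal.Quotient.mk (Ideal.span ({x} : Set R)))) heq
          rw [Ideal.comap_map_of_surjective _ Ideal.Quotient.mk_surjective,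
            Ideal.comap_map_of_surjective _ Ideal.Quotient.mk_surjective,
            ← RingHom.ker_eq_comap_bot, Ideal.mk_ker,
            sup_eq_left.mpr ((Ideal.span_singleton_le_iff_mem _).mpr (hxall i.castSucc)),
            sup_eq_left.mpr ((Ideal.span_singleton_le_iff_mem _).mpr (hxall i.succ))] at hc
          exact hstep.ne (PrimeSpectrum.ext hc) }
    have hlast : q'.last = V := by
      apply PrimeSpectrum.ext
      show Ideal.map (Ideal.Quotient.mk (Ideal.span ({x} : Set R))) q.last.asIdeal = V.asIdeal
      rw [hq2, hp, PrimeSpectrum.comap_asIdeal]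
      exact Ideal.map_comap_of_surjective _ Ideal.Quotient.mk_surjective _
    have hle : (q'.length : ℕ∞) ≤ Order.height V := by
      have := Order.length_le_height_last (p := q')
      rwa [hlast] at this
    have hq'len : q'.length = n := hq1
    rw [hplen]
    push_cast
    rw [← hq'len]
    exact add_le_add hle le_rfl

lemma height_closedPoint_eq {R : Type*} [CommRing R] [IsLocalRing R] {d : ℕ}
    (hdim : ringKrullDim R = (d : ℕ)) :
    Order.height (closedPoint R) = (d : ℕ∞) := by
  letI : OrderTop (PrimeSpectrum R) :=
    { top := closedPoint R
      le_top := fun a =>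
        (PrimeSpectrum.asIdeal_le_asIdeal _ _).mp (le_maximalIdeal a.2.ne_top) }
  have h := Order.height_top_eq_krullDim (α := PrimeSpectrum R)
  have h2 : (Order.height (⊤ : PrimeSpectrum R) : WithBot ℕ∞) = ((d : ℕ∞) : WithBot ℕ∞) := by
    rw [h]
    exact hdim
  exact_mod_cast h2

lemma ringKrullDim_quotient_le_one {R : Type*} [CommRing R] [IsLocalRing R] (p : Ideal R)
    (hp : p.IsPrime)
    (hnb : ∀ z : Ideal R, z.IsPrime → p < z → z < maximalIdeal R → False) :
    ringKrullDim (R ⧸ p) ≤ 1 := by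
  have hser : ∀ q : LTSeries (PrimeSpectrum (R ⧸ p)), q.length ≤ 1 := by
    intro q
    by_contra hq
    push_neg at hq
    have h2 : 2 ≤ q.length := hq
    set mk : R →+* R ⧸ p := Ideal.Quotient.mk p with hmkdef
    have hcomap_strict : ∀ i j : Fin (q.length + 1), i < j →
        (q i).asIdeal.comap mk < (q j).asIdeal.comap mk := by
      intro i j hij
      have hlt := q.strictMono hij
      rw [← PrimeSpectrum.asIdeal_lt_asIdeal] at hlt
      refine lt_of_le_of_ne (Ideal.comap_mono hlt.le) ?_
      intro h
      have := congrArg (Ideal.map mk) h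
      rw [Ideal.map_comap_of_surjective mk Ideal.Quotient.mk_surjective,
        Ideal.map_comap_of_surjective mk Ideal.Quotient.mk_surjective] at this
      exact hlt.ne this
    set i0 : Fin (q.length + 1) := ⟨0, by omega⟩
    set i1 : Fin (q.length + 1) := ⟨1, by omega⟩
    set i2 : Fin (q.length + 1) := ⟨2, by omega⟩
    have h01 := hcomap_strict i0 i1 (by simp [i0, i1, Fin.lt_def])
    have h12 := hcomap_strict i1 i2 (by simp [i1, i2, Fin.lt_def])
    refine hnb ((q i1).asIdeal.comap mk) ((q i1).2.comap mk) ?_ ?_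
    · refine lt_of_le_of_lt ?_ h01
      intro a ha
      rw [Ideal.mem_comap]
      have h0 : mk a = 0 := Ideal.Quotient.eq_zero_iff_mem.mpr ha
      rw [h0]
      exact zero_mem _
    · refine lt_of_lt_of_le h12 ?_
      exact le_maximalIdeal (fun h => ((q i2).2.comap mk).ne_top h)
  rw [ringKrullDim]
  refine iSup_le fun q => ?_
  have := hser q
  exact_mod_cast Nat.cast_le.mpr this

/-- Let `(A, n)` be an equidimensional complete Noetherian local ring of dimension
`d ≥ 3`, and fix `x ∈ n` lying in no minimal prime of any ideal in `Ξ(A)`.  Then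
for any `1 ≤ t ≤ d - 2`, if `Γ_t(A/(x))` is connected, then `Γ_t(A)` is
connected. -/
theorem gamma_connected_of_gamma_quotient_connected
    (A : Type*) [CommRing A] [IsLocalRing A] [IsNoetherianRing A]
    [IsAdicComplete (maximalIdeal A) A]
    (hequi : IsEquidimensional A) (d : ℕ) (hd : 3 ≤ d)
    (hdim : ringKrullDim A = (d : ℕ))
    (x : A) (hx : x ∈ maximalIdeal A)
    (hxXi : ∀ I ∈ Xi A, ∀ P ∈ I.minimalPrimes, x ∉ P)
    (t : ℕ) (ht : 1 ≤ t) (htd : t ≤ d - 2)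
    (hconn : (Gamma (A ⧸ Ideal.span {x}) t).Connected) :
    (Gamma A t).Connected := by
  set B := A ⧸ Ideal.span ({x} : Set A) with hB
  set π : A →+* B := Ideal.Quotient.mk (Ideal.span ({x} : Set A)) with hπ
  have hn_prime : (maximalIdeal A).IsPrime := (maximalIdeal.isMaximal A).isPrime
  have hspan_le : Ideal.span ({x} : Set A) ≤ maximalIdeal A :=
    (Ideal.span_singleton_le_iff_mem _).mpr hx
  -- the choice function ψ from minimal primes of B to minimal primes of A
  have hψ : ∀ v : {p : Ideal B // p ∈ minimalPrimes B},
      ∃ r, r ∈ minimalPrimes A ∧ r ≤ (v.1).comap π := by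
    intro v
    haveI : (v.1).IsPrime := v.2.1.1
    haveI : ((v.1).comap π).IsPrime := Ideal.IsPrime.comap π
    exact Ideal.exists_minimalPrimes_le (bot_le : (⊥ : Ideal A) ≤ (v.1).comap π)
  set ψ : {p : Ideal B // p ∈ minimalPrimes B} → {p : Ideal A // p ∈ minimalPrimes A} :=
    fun v => ⟨(hψ v).choose, (hψ v).choose_spec.1⟩ with hψdef
  have hψle : ∀ v, (ψ v).1 ≤ (v.1).comap π := fun v => (hψ v).choose_spec.2
  -- key edge transfer lemma
  have edge : ∀ v w, (Gamma B t).Adj v w → ψ v = ψ w ∨ (Gamma A t).Adj (ψ v) (ψ w) := by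
    intro v w hadj
    obtain ⟨hne, hht⟩ := (hadj : v ≠ w ∧ Ideal.height' (v.1 ⊔ w.1) ≤ (t : ℕ∞))
    by_cases heq : ψ v = ψ w
    · exact Or.inl heq
    right
    refine ⟨heq, ?_⟩
    obtain ⟨Vb, hVble, hVbht⟩ := exists_prime_of_height'_le _ t hht
    set V : PrimeSpectrum A := (PrimeSpectrum.comap π) Vb with hV
    have hVas : V.asIdeal = (Vb.asIdeal).comap π := rfl
    have hxV : x ∈ V.asIdeal := by
      rw [hVas, Ideal.mem_comap]
      rw [hπ, Ideal.Quotient.eq_zero_iff_mem.mpr (Ideal.mem_span_singleton_self x)]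
      exact zero_mem _
    have hrV : (ψ v).1 ≤ V.asIdeal := by
      refine (hψle v).trans ?_
      rw [hVas]
      exact Ideal.comap_mono (le_sup_left.trans hVble)
    have hr'V : (ψ w).1 ≤ V.asIdeal := by
      refine (hψle w).trans ?_
      rw [hVas]
      exact Ideal.comap_mono (le_sup_right.trans hVble)
    have hIV : (ψ v).1 ⊔ (ψ w).1 ≤ V.asIdeal := sup_le hrV hr'V
    have hheightV : Order.height V ≤ (t : ℕ∞) + 1 :=
      le_trans (height_comap_le x Vb) (add_le_add hVbht le_rfl)
    by_cases hrad : ((ψ v).1 ⊔ (ψ w).1).radical = maximalIdeal A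
    · exfalso
      have h1 : maximalIdeal A ≤ V.asIdeal := hrad ▸ (V.2.radical_le_iff.mpr hIV)
      have h2 : V = closedPoint A := by
        apply PrimeSpectrum.ext
        exact le_antisymm (le_maximalIdeal V.2.ne_top) h1
      rw [h2, height_closedPoint_eq hdim] at hheightV
      have : d ≤ t + 1 := by exact_mod_cast hheightV
      omega
    · have hXi : (ψ v).1 ⊔ (ψ w).1 ∈ Xi A := ⟨_, (ψ v).2, _, (ψ w).2, rfl, hrad⟩
      haveI := V.2
      obtain ⟨Z, hZ, hZle⟩ := Ideal.exists_minimalPrimes_le hIV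
      have hxZ : x ∉ Z := hxXi _ hXi Z hZ
      have hZprime : Z.IsPrime := hZ.1.1
      have hZV : (⟨Z, hZprime⟩ : PrimeSpectrum A) < V :=
        (PrimeSpectrum.asIdeal_lt_asIdeal _ _).mp
          (lt_of_le_of_ne hZle (fun h => hxZ (by rw [show Z = V.asIdeal from h]; exact hxV)))
      have h1 := (height_add_one_le_of_lt hZV).trans hheightV
      have h2 : Order.height (⟨Z, hZprime⟩ : PrimeSpectrum A) ≤ (t : ℕ∞) :=
        (ENat.add_le_add_iff_right (by simp)).mp h1
      exact le_trans (height'_le_height _ ⟨Z, hZprime⟩ hZ.1.2) h2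
  -- endpoint lemma
  have endpoint : ∀ pa : {p : Ideal A // p ∈ minimalPrimes A}, ∃ v, ψ v = pa := by
    intro pa
    have hpprime : pa.1.IsPrime := pa.2.1.1
    have hsup : pa.1 ⊔ Ideal.span ({x} : Set A) ≤ maximalIdeal A :=
      sup_le (le_maximalIdeal hpprime.ne_top) hspan_le
    haveI := hn_prime
    obtain ⟨Q, hQ, hQle⟩ := Ideal.exists_minimalPrimes_le hsup
    haveI hQprime : Q.IsPrime := hQ.1.1
    have hpQ : pa.1 ≤ Q := le_sup_left.trans hQ.1.2
    have hxQ : x ∈ Q := hQ.1.2 (Ideal.mem_sup_right (Ideal.mem_span_singleton_self x))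
    have hQn : Q ≠ maximalIdeal A := by
      intro h
      have h1 : ringKrullDim (A ⧸ pa.1) ≤ 1 :=
        ringKrullDim_quotient_le_one pa.1 hpprime
          (fun z hz hz1 hz2 => no_prime_strictly_between pa.1 hpprime x Q hQ z hz hz1
            (h ▸ hz2))
      have h2 := hequi pa.1 pa.2
      rw [hdim] at h2
      rw [h2] at h1
      have : d ≤ 1 := by exact_mod_cast h1
      omega
    obtain ⟨R', hR', hR'le⟩ := Ideal.exists_minimalPrimes_le
      ((Ideal.span_singleton_le_iff_mem _).mpr hxQ)
    rw [Ideal.minimalPrimes_eq_comap] at hR'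
    obtain ⟨Rb, hRb, hRbeq⟩ := hR'
    refine ⟨⟨Rb, hRb⟩, ?_⟩
    set r0 := ψ ⟨Rb, hRb⟩ with hr0def
    have hr0 : r0.1 ≤ R' := by
      rw [← hRbeq]
      exact hψle ⟨Rb, hRb⟩
    have hIQ : pa.1 ⊔ r0.1 ≤ Q := sup_le hpQ (hr0.trans hR'le)
    have hrad : (pa.1 ⊔ r0.1).radical ≠ maximalIdeal A := by
      intro h
      have h1 : maximalIdeal A ≤ Q := h ▸ (hQprime.radical_le_iff.mpr hIQ)
      exact hQn (le_antisymm (le_maximalIdeal hQprime.ne_top) h1)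
    have hXi2 : pa.1 ⊔ r0.1 ∈ Xi A := ⟨_, pa.2, _, r0.2, rfl, hrad⟩
    obtain ⟨Z, hZ, hZle⟩ := Ideal.exists_minimalPrimes_le hIQ
    have hxZ : x ∉ Z := hxXi _ hXi2 Z hZ
    have hZQ : Z < Q := lt_of_le_of_ne hZle (fun h => hxZ (h ▸ hxQ))
    have hpZ : pa.1 ≤ Z := le_sup_left.trans hZ.1.2
    have hZp : Z = pa.1 := by
      by_contra hne
      exact no_prime_strictly_between pa.1 hpprime x Q hQ Z hZ.1.1
        (lt_of_le_of_ne hpZ (Ne.symm hne)) hZQ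
    have hr0pa : r0.1 ≤ pa.1 := hZp ▸ (le_sup_right.trans hZ.1.2)
    have hpar0 : pa.1 ≤ r0.1 := pa.2.2 ⟨r0.2.1.1, bot_le⟩ hr0pa
    exact Subtype.ext (le_antisymm hr0pa hpar0)
  -- transfer reachability along ψ
  have walk : ∀ v w, (Gamma B t).Reachable v w → (Gamma A t).Reachable (ψ v) (ψ w) := by
    intro v w h
    obtain ⟨pw⟩ := h
    induction pw with
    | nil => exact SimpleGraph.Reachable.refl _
    | cons hadj p ih =>
      rcases edge _ _ hadj with h' | h'
      · rw [h']
        exact ih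
      · exact (h'.reachable).trans ih
  rw [SimpleGraph.connected_iff]
  constructor
  · intro pa qa
    obtain ⟨v, hv⟩ := endpoint pa
    obtain ⟨w, hw⟩ := endpoint qa
    have := walk v w (hconn.preconnected v w)
    rwa [hv, hw] at this
  · obtain ⟨r, hr, -⟩ := Ideal.exists_minimalPrimes_le (bot_le : (⊥ : Ideal A) ≤ maximalIdeal A)
    exact ⟨⟨r, hr⟩⟩
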